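/- Let K be a perfect field of prime characteristic p and let R = K[[x₁, …, x_d]]. Let R^{1/p} denote R viewed as an R-module via r · s = r^p s (equivalently, the module of p-th roots). Then Hom_R(R^{1/p}, R) is a free R^{1/p}-module of rank 1, generated by the projection dual to the monomial basis element (x₁⋯x_d)^{(p-1)/p}. -/

import Mathlib

set_option linter.unusedSectionVars false

namespace Fedder13

open MvPowerSeries

variable {K : Type*} [Field K] (p : ℕ) [Fact p.Prime] [CharP K p] [PerfectRing K p] {d : ℕ}

/-- The finsupp with all entries `p - 1`. -/
noncomputable def PP (p d : ℕ) : Fin d →₀ ℕ :=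
  Finsupp.equivFunOnFinite.symm fun _ => p - 1

@[simp] theorem PP_apply (i : Fin d) : PP p d i = p - 1 := rfl

noncomputable def amod (p : ℕ) (a : Fin d →₀ ℕ) : Fin d →₀ ℕ :=
  Finsupp.equivFunOnFinite.symm fun i => a i % p

noncomputable def adiv (p : ℕ) (a : Fin d →₀ ℕ) : Fin d →₀ ℕ :=
  Finsupp.equivFunOnFinite.symm fun i => a i / p

@[simp] theorem amod_apply (a : Fin d →₀ ℕ) (i : Fin d) : amod p a i = a i % p := rfl
@[simp] theorem adiv_apply (a : Fin d →₀ ℕ) (i : Fin d) : adiv p a i = a i / p := rfl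

theorem psmul_inj (hp : p ≠ 0) {u b : Fin d →₀ ℕ} (h : p • u = p • b) : u = b := by
  ext i
  have := DFunLike.congr_fun h i
  simp only [Finsupp.smul_apply, smul_eq_mul] at this
  exact Nat.eq_of_mul_eq_mul_left (Nat.pos_of_ne_zero hp) this

/-- The Frobenius-trace / projection map. -/
noncomputable def pr (t : MvPowerSeries (Fin d) K) : MvPowerSeries (Fin d) K :=
  fun q : Fin d →₀ ℕ => (frobeniusEquiv K p).symm (coeff (R := K) (p • q + PP p d) t)

theorem coeff_pr (t : MvPowerSeries (Fin d) K) (q : Fin d →₀ ℕ) :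
    coeff (R := K) q (pr p t) = (frobeniusEquiv K p).symm (coeff (R := K) (p • q + PP p d) t) := rfl

theorem pr_add (s t : MvPowerSeries (Fin d) K) : pr p (s + t) = pr p s + pr p t := by
  ext q
  simp [coeff_pr, map_add]


theorem mvpoly_coeff_pow_smul (f : MvPolynomial (Fin d) K) (b : Fin d →₀ ℕ) :
    MvPolynomial.coeff (p • b) (f ^ p) = (MvPolynomial.coeff b f) ^ p := by
  classical
  induction f using MvPolynomial.induction_on' with
  | monomial u c =>
    rw [MvPolynomial.monomial_pow, MvPolynomial.coeff_monomial, MvPolynomial.coeff_monomial]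
    by_cases h : u = b
    · simp [h]
    · rw [if_neg (fun hh => h (psmul_inj p (Fact.out : p.Prime).ne_zero hh)), if_neg h,
        zero_pow (Fact.out : p.Prime).ne_zero]
  | add f g hf hg =>
    rw [add_pow_char, MvPolynomial.coeff_add, hf, hg, MvPolynomial.coeff_add, add_pow_char]

theorem mvpoly_coeff_pow_ne (f : MvPolynomial (Fin d) K) (a : Fin d →₀ ℕ)
    (ha : ∀ b, a ≠ p • b) : MvPolynomial.coeff a (f ^ p) = 0 := by
  classical
  induction f using MvPolynomial.induction_on' with
  | monomial u c =>
    rw [MvPolynomial.monomial_pow, MvPolynomial.coeff_monomial, if_neg fun h => ha u h.symm]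
  | add f g hf hg =>
    rw [add_pow_char, MvPolynomial.coeff_add, hf, hg, add_zero]

theorem coeff_pow_congr (n : ℕ) (f g : MvPowerSeries (Fin d) K) :
    ∀ a : Fin d →₀ ℕ, (∀ b ≤ a, coeff (R := K) b f = coeff (R := K) b g) →
      coeff (R := K) a (f ^ n) = coeff (R := K) a (g ^ n) := by
  classical
  induction n with
  | zero => simp
  | succ n ih =>
    intro a h
    rw [pow_succ, pow_succ, coeff_mul, coeff_mul]
    refine Finset.sum_congr rfl fun uv huv => ?_
    rw [Finset.HasAntidiagonal.mem_antidiagonal] at huv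
    have hu : uv.1 ≤ a := huv ▸ le_self_add
    have hv : uv.2 ≤ a := huv ▸ le_add_self
    rw [ih uv.1 (fun b hb => h b (hb.trans hu)), h uv.2 hv]

/-- A polynomial agreeing with `f` on all coefficients `≤ a`. -/
noncomputable def truncP (a : Fin d →₀ ℕ) (f : MvPowerSeries (Fin d) K) :
    MvPolynomial (Fin d) K :=
  ∑ c ∈ Finset.Iic a, MvPolynomial.monomial c (coeff (R := K) c f)

theorem coeff_truncP (a : Fin d →₀ ℕ) (f : MvPowerSeries (Fin d) K) {c : Fin d →₀ ℕ}
    (hc : c ≤ a) : MvPolynomial.coeff c (truncP a f) = coeff (R := K) c f := by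
  classical
  rw [truncP, MvPolynomial.coeff_sum]
  simp only [MvPolynomial.coeff_monomial]
  rw [Finset.sum_ite_eq' (Finset.Iic a) c (fun c => coeff (R := K) c f), if_pos (Finset.mem_Iic.mpr hc)]

theorem coeff_pow_eq_truncP (a : Fin d →₀ ℕ) (f : MvPowerSeries (Fin d) K) (n : ℕ) :
    coeff (R := K) a (f ^ n) = MvPolynomial.coeff a ((truncP a f) ^ n) := by
  rw [coeff_pow_congr n f ((truncP a f : MvPolynomial (Fin d) K) : MvPowerSeries (Fin d) K) a
    (fun b hb => by rw [MvPolynomial.coeff_coe, coeff_truncP a f hb]),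
    ← MvPolynomial.coe_pow, MvPolynomial.coeff_coe]

theorem coeff_pow_p_smul (f : MvPowerSeries (Fin d) K) (b : Fin d →₀ ℕ) :
    coeff (R := K) (p • b) (f ^ p) = (coeff (R := K) b f) ^ p := by
  have hb : b ≤ p • b := by
    intro i
    simpa using Nat.le_mul_of_pos_left (b i) (Fact.out : p.Prime).pos
  rw [coeff_pow_eq_truncP, mvpoly_coeff_pow_smul, coeff_truncP _ _ hb]

theorem coeff_pow_p_ne (f : MvPowerSeries (Fin d) K) (a : Fin d →₀ ℕ)
    (ha : ∀ b, a ≠ p • b) : coeff (R := K) a (f ^ p) = 0 := by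
  rw [coeff_pow_eq_truncP, mvpoly_coeff_pow_ne p _ _ ha]


theorem pr_semilinear (r s : MvPowerSeries (Fin d) K) :
    pr p (r ^ p * s) = r * pr p s := by
  classical
  have hp1 : 1 ≤ p := (Fact.out : p.Prime).pos
  ext q
  set F : (Fin d →₀ ℕ) × (Fin d →₀ ℕ) → K := fun uv =>
    (frobeniusEquiv K p).symm (coeff (R := K) uv.1 (r ^ p)) *
      (frobeniusEquiv K p).symm (coeff (R := K) uv.2 s) with hF
  have lhs : coeff (R := K) q (pr p (r ^ p * s))
      = ∑ uv ∈ Finset.HasAntidiagonal.antidiagonal (p • q + PP p d), F uv := by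
    rw [coeff_pr, coeff_mul, map_sum]
    simp only [map_mul, hF]
  have rhs : coeff (R := K) q (r * pr p s)
      = ∑ uv ∈ Finset.HasAntidiagonal.antidiagonal q, coeff (R := K) uv.1 r * coeff (R := K) uv.2 (pr p s) := coeff_mul _ _ _
  have key : ∑ uv ∈ Finset.HasAntidiagonal.antidiagonal (p • q + PP p d), F uv
      = ∑ uv ∈ (Finset.HasAntidiagonal.antidiagonal q).image
          (fun uv : (Fin d →₀ ℕ) × (Fin d →₀ ℕ) => (p • uv.1, p • uv.2 + PP p d)), F uv := by
    refine (Finset.sum_subset ?_ ?_).symm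
    · intro x hx
      rw [Finset.mem_image] at hx
      obtain ⟨uv, huv, rfl⟩ := hx
      rw [Finset.HasAntidiagonal.mem_antidiagonal] at huv ⊢
      rw [← add_assoc, ← smul_add, huv]
    · intro x hx hnx
      by_cases hdvd : ∃ b, x.1 = p • b
      · exfalso
        apply hnx
        obtain ⟨b, hb⟩ := hdvd
        rw [Finset.HasAntidiagonal.mem_antidiagonal] at hx
        have hpt : ∀ i, p * b i + x.2 i = p * q i + (p - 1) := by
          intro i
          have h := DFunLike.congr_fun hx i
          rw [hb] at h
          simpa [Finsupp.smul_apply, smul_eq_mul] using h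
        have hble : b ≤ q := by
          intro i
          by_contra hlt
          push_neg at hlt
          have h2 : p * (q i + 1) ≤ p * b i := Nat.mul_le_mul_left p hlt
          rw [Nat.mul_add, Nat.mul_one] at h2
          have := hpt i
          omega
        rw [Finset.mem_image]
        refine ⟨(b, q - b), Finset.HasAntidiagonal.mem_antidiagonal.mpr (add_tsub_cancel_of_le hble), ?_⟩
        refine Prod.ext hb.symm ?_
        ext i
        have h1 := hpt i
        have h2 : p * q i = p * b i + p * (q i - b i) := by
          rw [← Nat.mul_add, Nat.add_sub_cancel' (hble i)]
        simp only [Finsupp.add_apply, Finsupp.smul_apply, smul_eq_mul, PP_apply,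
          Finsupp.tsub_apply]
        omega
      · push_neg at hdvd
        rw [hF]
        have h0 : coeff (R := K) x.1 (r ^ p) = 0 := coeff_pow_p_ne p r x.1 hdvd
        simp [h0]
  have hinj : ∀ x ∈ Finset.HasAntidiagonal.antidiagonal q, ∀ y ∈ Finset.HasAntidiagonal.antidiagonal q,
      (fun uv : (Fin d →₀ ℕ) × (Fin d →₀ ℕ) => (p • uv.1, p • uv.2 + PP p d)) x =
        (fun uv : (Fin d →₀ ℕ) × (Fin d →₀ ℕ) => (p • uv.1, p • uv.2 + PP p d)) y → x = y := by
    intro x _ y _ hxy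
    simp only [Prod.mk.injEq] at hxy
    exact Prod.ext (psmul_inj p (by omega) hxy.1)
      (psmul_inj p (by omega) (add_right_cancel hxy.2))
  rw [lhs, rhs, key, Finset.sum_image hinj]
  refine Finset.sum_congr rfl fun uv _ => ?_
  rw [hF]
  simp only
  rw [coeff_pow_p_smul, ← frobenius_def, frobeniusEquiv_symm_apply_frobenius, ← coeff_pr]

theorem pr_monomial (a : Fin d →₀ ℕ) (ha : ∀ i, a i < p) :
    pr p (monomial (R := K) a 1) = if ∀ i, a i = p - 1 then 1 else 0 := by
  classical
  have hp1 : 1 ≤ p := (Fact.out : p.Prime).pos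
  by_cases h : ∀ i, a i = p - 1
  · rw [if_pos h]
    have ha' : a = PP p d := by ext i; rw [PP_apply, h i]
    ext q
    rw [coeff_pr, coeff_monomial, coeff_one]
    by_cases hq : q = 0
    · subst hq
      rw [if_pos rfl, if_pos (by simp [ha']), map_one]
    · rw [if_neg hq, if_neg ?_, map_zero]
      intro heq
      rw [ha'] at heq
      have h0 : p • q = 0 := by
        have := add_eq_right.mp heq
        exact this
      apply hq
      ext i
      have := DFunLike.congr_fun h0 i
      simp only [Finsupp.smul_apply, smul_eq_mul, Finsupp.coe_zero, Pi.zero_apply] at this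
      show q i = (0 : Fin d →₀ ℕ) i
      simp only [Finsupp.coe_zero, Pi.zero_apply]
      exact (Nat.mul_eq_zero.mp this).resolve_left (by omega)
  · rw [if_neg h]
    push_neg at h
    obtain ⟨i0, hi0⟩ := h
    ext q
    rw [coeff_pr, coeff_monomial, if_neg ?_, map_zero, map_zero]
    intro heq
    have hi := DFunLike.congr_fun heq i0
    simp only [Finsupp.add_apply, Finsupp.smul_apply, smul_eq_mul, PP_apply] at hi
    have hlt := ha i0
    rcases Nat.eq_zero_or_pos (q i0) with h0 | h0
    · rw [h0, Nat.mul_zero] at hi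
      omega
    · have hge : p ≤ p * q i0 := Nat.le_mul_of_pos_right p h0
      omega


noncomputable def sect (c : Fin d →₀ ℕ) (t : MvPowerSeries (Fin d) K) :
    MvPowerSeries (Fin d) K :=
  fun b : Fin d →₀ ℕ => (frobeniusEquiv K p).symm (coeff (R := K) (p • b + c) t)

theorem coeff_sect (c : Fin d →₀ ℕ) (t : MvPowerSeries (Fin d) K) (b : Fin d →₀ ℕ) :
    coeff (R := K) b (sect p c t) = (frobeniusEquiv K p).symm (coeff (R := K) (p • b + c) t) := rfl

theorem pr_monomial_mul (c : Fin d →₀ ℕ) (hc : c ≤ PP p d) (t : MvPowerSeries (Fin d) K) :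
    pr p (monomial (R := K) (PP p d - c) 1 * t) = sect p c t := by
  have hp1 : 1 ≤ p := (Fact.out : p.Prime).pos
  ext b
  have hidx : p • b + PP p d - (PP p d - c) = p • b + c := by
    ext i
    have hci : c i ≤ p - 1 := hc i
    simp only [Finsupp.tsub_apply, Finsupp.add_apply, Finsupp.smul_apply, smul_eq_mul, PP_apply]
    omega
  have hle : PP p d - c ≤ p • b + PP p d := by
    intro i
    simp only [Finsupp.tsub_apply, Finsupp.add_apply, Finsupp.smul_apply, smul_eq_mul, PP_apply]
    omega
  rw [coeff_pr, coeff_sect, coeff_monomial_mul, if_pos hle, one_mul, hidx]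

theorem decomp (t : MvPowerSeries (Fin d) K) :
    ∑ c ∈ Finset.Iic (PP p d), (sect p c t) ^ p * monomial (R := K) c 1 = t := by
  classical
  have hp1 : 1 ≤ p := (Fact.out : p.Prime).pos
  ext a
  rw [map_sum]
  rw [Finset.sum_eq_single (amod p a)]
  · have hle : amod p a ≤ a := fun i => Nat.mod_le _ _
    have hsub : a - amod p a = p • adiv p a := by
      ext i
      have := Nat.div_add_mod (a i) p
      simp only [Finsupp.tsub_apply, Finsupp.smul_apply, smul_eq_mul, amod_apply, adiv_apply]
      omega
    have hda : p • adiv p a + amod p a = a := by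
      ext i
      have := Nat.div_add_mod (a i) p
      simp only [Finsupp.add_apply, Finsupp.smul_apply, smul_eq_mul, amod_apply, adiv_apply]
      omega
    rw [coeff_mul_monomial, if_pos hle, mul_one, hsub, coeff_pow_p_smul, coeff_sect, hda,
      ← frobenius_def, frobenius_apply_frobeniusEquiv_symm]
  · intro c hcIic hc_ne
    have hcle : c ≤ PP p d := Finset.mem_Iic.mp hcIic
    rw [coeff_mul_monomial]
    split_ifs with hca
    · rw [mul_one]
      apply coeff_pow_p_ne
      intro b hb
      apply hc_ne
      ext i
      have h1 := DFunLike.congr_fun hb i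
      simp only [Finsupp.tsub_apply, Finsupp.smul_apply, smul_eq_mul] at h1
      have hci : c i ≤ p - 1 := hcle i
      have hcai : c i ≤ a i := hca i
      have ha_eq : a i = p * b i + c i := by omega
      show c i = a i % p
      rw [ha_eq, Nat.mul_add_mod, Nat.mod_eq_of_lt (by omega)]
    · rfl
  · intro hnot
    exact absurd (Finset.mem_Iic.mpr fun i => by
      have := Nat.mod_lt (a i) (show 0 < p by omega)
      simp only [amod_apply, PP_apply]
      omega) hnot

theorem addhom_sum {φ : MvPowerSeries (Fin d) K → MvPowerSeries (Fin d) K}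
    (hadd : ∀ s t, φ (s + t) = φ s + φ t) {ι : Type*} (s : Finset ι)
    (f : ι → MvPowerSeries (Fin d) K) :
    φ (∑ i ∈ s, f i) = ∑ i ∈ s, φ (f i) := by
  classical
  have h0 : φ 0 = 0 := by
    have := hadd 0 0
    rw [add_zero] at this
    exact (add_eq_left.mp this.symm)
  induction s using Finset.cons_induction with
  | empty => simpa using h0
  | cons i s hi ih => rw [Finset.sum_cons, Finset.sum_cons, hadd, ih]


theorem main (φ : MvPowerSeries (Fin d) K → MvPowerSeries (Fin d) K)
    (hadd : ∀ s t, φ (s + t) = φ s + φ t)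
    (hsemi : ∀ r s, φ (r ^ p * s) = r * φ s) :
    ∃! s : MvPowerSeries (Fin d) K, ∀ t, φ t = pr p (s * t) := by
  classical
  set s₀ : MvPowerSeries (Fin d) K :=
    ∑ c ∈ Finset.Iic (PP p d), (φ (monomial (R := K) c 1)) ^ p * monomial (R := K) (PP p d - c) 1 with hs₀
  have hworks : ∀ t, φ t = pr p (s₀ * t) := by
    intro t
    conv_lhs => rw [← decomp p t]
    rw [addhom_sum hadd]
    have hterm : ∀ c ∈ Finset.Iic (PP p d),
        φ ((sect p c t) ^ p * monomial (R := K) c 1) = sect p c t * φ (monomial (R := K) c 1) :=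
      fun c _ => hsemi _ _
    rw [Finset.sum_congr rfl hterm, hs₀, Finset.sum_mul]
    have hassoc : ∀ c ∈ Finset.Iic (PP p d),
        (φ (monomial (R := K) c 1)) ^ p * monomial (R := K) (PP p d - c) 1 * t
          = (φ (monomial (R := K) c 1)) ^ p * (monomial (R := K) (PP p d - c) 1 * t) :=
      fun c _ => mul_assoc _ _ _
    rw [Finset.sum_congr rfl hassoc, addhom_sum (pr_add p)]
    refine Finset.sum_congr rfl fun c hc => ?_
    rw [pr_semilinear, pr_monomial_mul p c (Finset.mem_Iic.mp hc), mul_comm]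
  refine ⟨s₀, hworks, ?_⟩
  intro y hy
  have hcong : ∀ t, pr p (y * t) = pr p (s₀ * t) := fun t => (hy t).symm.trans (hworks t)
  ext a
  have hc0 : amod p a ≤ PP p d := by
    intro i
    have := Nat.mod_lt (a i) (show 0 < p from (Fact.out : p.Prime).pos)
    simp only [amod_apply, PP_apply]
    omega
  have h1 := hcong (monomial (R := K) (PP p d - amod p a) 1)
  rw [mul_comm y _, mul_comm s₀ _, pr_monomial_mul p _ hc0, pr_monomial_mul p _ hc0] at h1
  have h2 := congrArg (coeff (R := K) (adiv p a)) h1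
  rw [coeff_sect, coeff_sect] at h2
  have h3 := (frobeniusEquiv K p).symm.injective h2
  have hda : p • adiv p a + amod p a = a := by
    ext i
    have := Nat.div_add_mod (a i) p
    simp only [Finsupp.add_apply, Finsupp.smul_apply, smul_eq_mul, amod_apply, adiv_apply]
    omega
  rw [hda] at h3
  exact h3

end Fedder13

open MvPowerSeries in
theorem stmt_13 (K : Type*) [Field K] (p : ℕ) [Fact p.Prime] [CharP K p]
    [PerfectRing K p] (d : ℕ) :
    ∃ π : MvPowerSeries (Fin d) K → MvPowerSeries (Fin d) K,
      (∀ s t, π (s + t) = π s + π t) ∧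
      (∀ r s, π (r ^ p * s) = r * π s) ∧
      (∀ a : Fin d →₀ ℕ, (∀ i, a i < p) →
        π (monomial (R := K) a 1) = if ∀ i, a i = p - 1 then 1 else 0) ∧
      (∀ φ : MvPowerSeries (Fin d) K → MvPowerSeries (Fin d) K,
        (∀ s t, φ (s + t) = φ s + φ t) → (∀ r s, φ (r ^ p * s) = r * φ s) →
        ∃! s : MvPowerSeries (Fin d) K, ∀ t, φ t = π (s * t)) := by
  exact ⟨Fedder13.pr p, Fedder13.pr_add p, Fedder13.pr_semilinear p,
    Fedder13.pr_monomial p, Fedder13.main p⟩
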